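/- Let M and M'' be ℚ-vector spaces, let A be a finite index set, and for each α ∈ A let M'_α be a ℚ-vector space, ν_α : M → ℚ and ν'_α : M'_α → ℚ ℚ-linear functionals, and φ_α : M → M'_α and φ'_α : M'_α → M'' ℚ-linear maps. Assume (i) the composite φ'_α ∘ φ_α : M → M'' is a single map Φ independent of α, and (ii) for all f, g ∈ M, Σ_{α ∈ A} (ν_α(f)·ν'_α(φ_α(g)) − ν_α(g)·ν'_α(φ_α(f))) = 0. Then for every q ≥ 2, Σ_{α ∈ A} Res_{ν'_α,φ'_α} ∘ Res_{ν_α,φ_α} = 0 as a ℚ-linear map ⋀^q M → ⋀^{q−2} M''. -/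

import Mathlib

open ExteriorAlgebra

/-- The wedge `f 0 ∧ ⋯ ∧ f (q-1)` as an element of the `q`-th exterior power
of a `ℚ`-vector space. -/
noncomputable def wedge {M : Type*} [AddCommGroup M] [Module ℚ M] (q : ℕ) (f : Fin q → M) :
    ⋀[ℚ]^q M :=
  ⟨ExteriorAlgebra.ιMulti ℚ q f, ExteriorAlgebra.ιMulti_range ℚ q ⟨f, rfl⟩⟩

/-- `R : ⋀^{n+1} M → ⋀^n M'` is the residue map `Res_{ν,φ}` iff it takes the defining
values on wedges. -/
def IsResMap {M M' : Type*} [AddCommGroup M] [Module ℚ M] [AddCommGroup M'] [Module ℚ M']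
    (n : ℕ) (ν : M →ₗ[ℚ] ℚ) (φ : M →ₗ[ℚ] M')
    (R : (⋀[ℚ]^(n + 1) M) →ₗ[ℚ] (⋀[ℚ]^n M')) : Prop :=
  ∀ f : Fin (n + 1) → M,
    R (wedge (n + 1) f) =
      ∑ i : Fin (n + 1), ((-1 : ℚ) ^ (i : ℕ) * ν (f i)) •
        wedge n (fun j => φ (f (i.succAbove j)))

lemma wedge_span {M : Type*} [AddCommGroup M] [Module ℚ M] (q : ℕ) :
    Submodule.span ℚ (Set.range (wedge (M := M) q)) = ⊤ := by
  apply Submodule.map_injective_of_injective (Submodule.injective_subtype (⋀[ℚ]^q M))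
  have himg : (⋀[ℚ]^q M).subtype '' Set.range (wedge q) = Set.range (ιMulti ℚ q (M := M)) := by
    ext x
    constructor
    · rintro ⟨-, ⟨f, rfl⟩, rfl⟩; exact ⟨f, rfl⟩
    · rintro ⟨f, rfl⟩; exact ⟨wedge q f, ⟨f, rfl⟩, rfl⟩
  rw [Submodule.map_span, Submodule.map_top, Submodule.range_subtype, himg,
    ExteriorAlgebra.ιMulti_span_fixedDegree ℚ q]

lemma val_succAbove {n : ℕ} (p : Fin (n + 1)) (i : Fin n) :
    ((p.succAbove i : Fin (n + 1)) : ℕ) = if (i : ℕ) < (p : ℕ) then (i : ℕ) else (i : ℕ) + 1 := by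
  rw [Fin.succAbove]
  split_ifs with h1 h2 h3 <;>
    simp_all [Fin.lt_def, Fin.coe_castSucc, Fin.val_succ]

def swapPair {n : ℕ} (p : Fin (n + 2) × Fin (n + 1)) : Fin (n + 2) × Fin (n + 1) :=
  (p.1.succAbove p.2,
    if h : (p.2 : ℕ) < (p.1 : ℕ) then ⟨(p.1 : ℕ) - 1, by have := p.1.isLt; omega⟩
    else ⟨(p.1 : ℕ), by have := p.2.isLt; omega⟩)

lemma swapPair_fst_val {n : ℕ} (p : Fin (n + 2) × Fin (n + 1)) :
    ((swapPair p).1 : ℕ) = if (p.2 : ℕ) < (p.1 : ℕ) then (p.2 : ℕ) else (p.2 : ℕ) + 1 :=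
  val_succAbove _ _

lemma swapPair_snd_val {n : ℕ} (p : Fin (n + 2) × Fin (n + 1)) :
    ((swapPair p).2 : ℕ) = if (p.2 : ℕ) < (p.1 : ℕ) then (p.1 : ℕ) - 1 else (p.1 : ℕ) := by
  simp only [swapPair]
  split_ifs <;> rfl

lemma swapPair_invol {n : ℕ} (p : Fin (n + 2) × Fin (n + 1)) : swapPair (swapPair p) = p := by
  have h1 := swapPair_fst_val (swapPair p)
  have h2 := swapPair_snd_val (swapPair p)
  rw [swapPair_fst_val p, swapPair_snd_val p] at h1 h2
  have hji := p.2.isLt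
  ext
  · rw [h1]; split_ifs at * <;> omega
  · rw [h2]; split_ifs at * <;> omega

lemma swapPair_succAbove {n : ℕ} (p : Fin (n + 2) × Fin (n + 1)) (l : Fin n) :
    (swapPair p).1.succAbove ((swapPair p).2.succAbove l) = p.1.succAbove (p.2.succAbove l) := by
  have hl := l.isLt
  have hji := p.2.isLt
  ext
  rw [val_succAbove, val_succAbove, val_succAbove, val_succAbove, swapPair_fst_val,
    swapPair_snd_val]
  split_ifs <;> omega

lemma swapPair_fst_succAbove {n : ℕ} (p : Fin (n + 2) × Fin (n + 1)) :
    (swapPair p).1.succAbove (swapPair p).2 = p.1 := by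
  have hji := p.2.isLt
  have hi := p.1.isLt
  ext
  rw [val_succAbove, swapPair_fst_val, swapPair_snd_val]
  split_ifs <;> omega

lemma swapPair_sign {n : ℕ} (p : Fin (n + 2) × Fin (n + 1)) :
    ((-1 : ℚ) ^ (((swapPair p).1 : ℕ) + ((swapPair p).2 : ℕ))) =
      -((-1 : ℚ) ^ ((p.1 : ℕ) + (p.2 : ℕ))) := by
  rw [swapPair_fst_val, swapPair_snd_val]
  split_ifs with h
  · have : (p.1 : ℕ) + (p.2 : ℕ) = ((p.2 : ℕ) + ((p.1 : ℕ) - 1)) + 1 := by omega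
    rw [this, pow_succ]; ring
  · have : ((p.2 : ℕ) + 1) + (p.1 : ℕ) = ((p.1 : ℕ) + (p.2 : ℕ)) + 1 := by omega
    rw [this, pow_succ]; ring

/-- if all the composites `φ'_α ∘ φ_α` coincide with a single map `Φ`, and
for all `f, g ∈ M` one has `Σ_α (ν_α(f)ν'_α(φ_α(g)) − ν_α(g)ν'_α(φ_α(f))) = 0`, then for
every `q = n + 2 ≥ 2` the sum of composed residue maps
`Σ_α Res_{ν'_α,φ'_α} ∘ Res_{ν_α,φ_α} : ⋀^q M → ⋀^{q−2} M''` vanishes. -/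
theorem statement_4 {M M'' : Type*} [AddCommGroup M] [Module ℚ M]
    [AddCommGroup M''] [Module ℚ M'']
    {A : Type*} [Fintype A] (M' : A → Type*)
    [∀ α, AddCommGroup (M' α)] [∀ α, Module ℚ (M' α)]
    (ν : ∀ α, M →ₗ[ℚ] ℚ) (ν' : ∀ α, M' α →ₗ[ℚ] ℚ)
    (φ : ∀ α, M →ₗ[ℚ] M' α) (φ' : ∀ α, M' α →ₗ[ℚ] M'')
    (Φ : M →ₗ[ℚ] M'') (hΦ : ∀ α, (φ' α) ∘ₗ (φ α) = Φ)
    (hsum : ∀ f g : M,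
      ∑ α : A, (ν α f * ν' α (φ α g) - ν α g * ν' α (φ α f)) = 0)
    (n : ℕ)
    (R : ∀ α, (⋀[ℚ]^(n + 2) M) →ₗ[ℚ] (⋀[ℚ]^(n + 1) (M' α)))
    (R' : ∀ α, (⋀[ℚ]^(n + 1) (M' α)) →ₗ[ℚ] (⋀[ℚ]^n M''))
    (hR : ∀ α, IsResMap (n + 1) (ν α) (φ α) (R α))
    (hR' : ∀ α, IsResMap n (ν' α) (φ' α) (R' α)) :
    ∑ α : A, (R' α) ∘ₗ (R α) = 0 := by
  have hΦ' : ∀ (α : A) (x : M), φ' α (φ α x) = Φ x := fun α x => LinearMap.congr_fun (hΦ α) x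
  apply LinearMap.ext_on (wedge_span (M := M) (n + 2))
  rintro _ ⟨f, rfl⟩
  rw [LinearMap.zero_apply, LinearMap.sum_apply]
  -- symmetric coefficient
  set c : Fin (n + 2) → Fin (n + 2) → ℚ :=
    fun i k => ∑ α : A, ν α (f i) * ν' α (φ α (f k)) with hc
  have hcsymm : ∀ i k, c i k = c k i := by
    intro i k
    have h := hsum (f i) (f k)
    rw [Finset.sum_sub_distrib] at h
    exact sub_eq_zero.mp h
  set W : Fin (n + 2) × Fin (n + 1) → (⋀[ℚ]^n M'') :=
    fun p => wedge n (fun l => Φ (f (p.1.succAbove (p.2.succAbove l)))) with hW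
  have step : ∀ α : A, (R' α ∘ₗ R α) (wedge (n + 2) f) =
      ∑ p : Fin (n + 2) × Fin (n + 1),
        (((-1 : ℚ) ^ ((p.1 : ℕ) + (p.2 : ℕ))) *
          (ν α (f p.1) * ν' α (φ α (f (p.1.succAbove p.2))))) • W p := by
    intro α
    have e1 : (R α) (wedge (n + 2) f) =
        ∑ i : Fin (n + 2), ((-1 : ℚ) ^ (i : ℕ) * ν α (f i)) •
          wedge (n + 1) (fun j => φ α (f (i.succAbove j))) := hR α f
    rw [LinearMap.comp_apply, e1, map_sum, Fintype.sum_prod_type]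
    refine Finset.sum_congr rfl fun i _ => ?_
    have e2 : (R' α) (wedge (n + 1) (fun j => φ α (f (i.succAbove j)))) =
        ∑ j : Fin (n + 1), ((-1 : ℚ) ^ (j : ℕ) * ν' α (φ α (f (i.succAbove j)))) •
          wedge n (fun l => φ' α (φ α (f (i.succAbove (j.succAbove l))))) := hR' α _
    rw [LinearMap.map_smul, e2, Finset.smul_sum]
    refine Finset.sum_congr rfl fun j _ => ?_
    rw [smul_smul]
    have hfun : (fun l => φ' α (φ α (f (i.succAbove (j.succAbove l))))) =
        fun l : Fin n => Φ (f (i.succAbove (j.succAbove l))) := funext fun l => hΦ' α _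
    rw [hfun]
    congr 1
    rw [pow_add]; ring
  rw [Finset.sum_congr rfl fun α _ => step α, Finset.sum_comm]
  have combine : ∀ p : Fin (n + 2) × Fin (n + 1),
      (∑ α : A, (((-1 : ℚ) ^ ((p.1 : ℕ) + (p.2 : ℕ))) *
          (ν α (f p.1) * ν' α (φ α (f (p.1.succAbove p.2))))) • W p) =
        (((-1 : ℚ) ^ ((p.1 : ℕ) + (p.2 : ℕ))) * c p.1 (p.1.succAbove p.2)) • W p := by
    intro p
    rw [← Finset.sum_smul, hc, Finset.mul_sum]
  rw [Finset.sum_congr rfl fun p _ => combine p]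
  apply Finset.sum_involution (fun p _ => swapPair p)
  · intro p _
    have hWs : W (swapPair p) = W p := by
      simp only [hW]
      congr 1
      funext l
      rw [swapPair_succAbove]
    have hcs : c (swapPair p).1 ((swapPair p).1.succAbove (swapPair p).2) =
        c p.1 (p.1.succAbove p.2) := by
      rw [swapPair_fst_succAbove]
      exact hcsymm _ _
    rw [hWs, hcs, swapPair_sign]
    rw [← add_smul]
    convert zero_smul ℚ (W p)
    ring
  · intro p _ _ h
    exact Fin.succAbove_ne p.1 p.2 (congrArg Prod.fst h)
  · intro p _
    exact Finset.mem_univ _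
  · intro p _
    exact swapPair_invol p
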